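/- With notation as above, let H(X) = X^d + a_{d−1}X^{d−1} + ⋯ + a₀ ∈ ℤ_p[X] with p | aᵢ for all i, set bᵢ = aᵢ/a₀ (with a_d = 1), J(X) = b₁X + ⋯ + b_dX^d, and l(X) = Σ_{k≥0}(−1)^k (J(φ))^k ∘ X. Then (1 + J(φ)) ∘ l(X) = X, and consequently H(φ) ∘ l(X) = a₀ · X. -/

import Mathlib

open PowerSeries

/-- Substitution `f(g(X))` of a power series `g` with zero constant term into `f`. -/
noncomputable def pcomp {R : Type*} [CommSemiring R] (f g : PowerSeries R) : PowerSeries R :=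
  PowerSeries.mk fun m => ∑ k ∈ Finset.range (m + 1),
    PowerSeries.coeff k f * PowerSeries.coeff m (g ^ k)

/-- The iterates `φ^{(k)}(X)`. -/
noncomputable def φiter {R : Type*} [CommSemiring R] (φ : PowerSeries R) : ℕ → PowerSeries R
  | 0 => PowerSeries.X
  | k + 1 => pcomp φ (φiter φ k)

/-- The operator `J(φ)`: `f ↦ b₁ f(φ(X)) + ⋯ + b_d f(φ^{(d)}(X))`. -/
noncomputable def Jop {R : Type*} [CommSemiring R] (d : ℕ) (b : ℕ → R) (φ : PowerSeries R)
    (f : PowerSeries R) : PowerSeries R :=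
  ∑ i ∈ Finset.Icc 1 d, PowerSeries.C (b i) * pcomp f (φiter φ i)

lemma coeff_pcomp {R : Type*} [CommSemiring R] (m : ℕ) (f g : PowerSeries R) :
    PowerSeries.coeff m (pcomp f g) =
    ∑ k ∈ Finset.range (m + 1), PowerSeries.coeff k f * PowerSeries.coeff m (g ^ k) := by
  simp [pcomp]

lemma pcomp_X {R : Type*} [CommSemiring R] (f : PowerSeries R) : pcomp f X = f := by
  ext m
  rw [coeff_pcomp]
  rw [Finset.sum_eq_single m]
  · simp [PowerSeries.coeff_X_pow]
  · intro k _ hk; simp [PowerSeries.coeff_X_pow, hk, Ne.symm hk]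
  · intro h; exact absurd (Finset.self_mem_range_succ m) h


lemma pcomp_add {R : Type*} [CommSemiring R] (f g h : PowerSeries R) :
    pcomp (f + g) h = pcomp f h + pcomp g h := by
  ext m
  simp [coeff_pcomp, add_mul, Finset.sum_add_distrib]

lemma pcomp_smul {R : Type*} [CommSemiring R] (c : R) (f g : PowerSeries R) :
    pcomp (c • f) g = c • pcomp f g := by
  ext m
  simp [coeff_pcomp, Finset.mul_sum, mul_assoc]

lemma Jop_add {R : Type*} [CommSemiring R] (d : ℕ) (b : ℕ → R) (φ f g : PowerSeries R) :
    Jop d b φ (f + g) = Jop d b φ f + Jop d b φ g := by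
  simp [Jop, pcomp_add, mul_add, Finset.sum_add_distrib]

lemma Jop_smul {R : Type*} [CommSemiring R] (d : ℕ) (b : ℕ → R) (c : R) (φ f : PowerSeries R) :
    Jop d b φ (c • f) = c • Jop d b φ f := by
  simp [Jop, pcomp_smul, Finset.smul_sum, mul_smul_comm]

lemma Jop_sum {R : Type*} [CommSemiring R] (d : ℕ) (b : ℕ → R) (φ : PowerSeries R)
    {ι : Type*} (s : Finset ι) (f : ι → PowerSeries R) :
    Jop d b φ (∑ i ∈ s, f i) = ∑ i ∈ s, Jop d b φ (f i) := by
  classical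
  induction s using Finset.induction with
  | empty => simp [Jop, pcomp]; ext m; simp [coeff_pcomp]
  | insert _ _ h ih => simp [Finset.sum_insert h, Jop_add, ih]

/-- Let `H(X) = X^d + a_{d−1}X^{d−1} + ⋯ + a₀ ∈ ℤ_p[X]` with `p | aᵢ`, `bᵢ = aᵢ/a₀`
(`a_d = 1`), `J(X) = b₁X + ⋯ + b_dX^d`, and `l(X) = Σ_{k≥0}(−1)^k(J(φ))^k ∘ X` (the
coefficientwise limit). Then `(1 + J(φ)) ∘ l(X) = X` and `H(φ) ∘ l(X) = a₀ · X`. -/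
theorem stmt2 (p : ℕ) [Fact p.Prime] (d : ℕ) (hd : 1 ≤ d)
    (a : ℕ → ℚ_[p]) (ha0 : a 0 ≠ 0) (had : a d = 1)
    (haint : ∀ i ≤ d, ‖a i‖ ≤ 1) (hap : ∀ i < d, ‖a i‖ ≤ (p : ℝ)⁻¹)
    (b : ℕ → ℚ_[p]) (hb : ∀ i, b i = a i / a 0)
    (φ : PowerSeries ℚ_[p])
    (hφ0 : PowerSeries.constantCoeff φ = 0)
    (hφint : ∀ k, ‖PowerSeries.coeff k φ‖ ≤ 1)
    (hφp : ∀ k, ‖PowerSeries.coeff k (φ - PowerSeries.X ^ p)‖ ≤ (p : ℝ)⁻¹)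
    (l : PowerSeries ℚ_[p])
    (hl : ∀ m : ℕ,
      Filter.Tendsto
        (fun N => PowerSeries.coeff m
          (∑ k ∈ Finset.range N, ((-1 : ℚ_[p]) ^ k) • ((Jop d b φ)^[k] PowerSeries.X)))
        Filter.atTop (nhds (PowerSeries.coeff m l))) :
    l + Jop d b φ l = PowerSeries.X ∧
    ∑ i ∈ Finset.range (d + 1), PowerSeries.C (a i) * pcomp l (φiter φ i) =
      PowerSeries.C (a 0) * PowerSeries.X := by
  set S : ℕ → PowerSeries ℚ_[p] :=
    fun N => ∑ k ∈ Finset.range N, ((-1 : ℚ_[p]) ^ k) • ((Jop d b φ)^[k] PowerSeries.X) with hSdef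
  -- key algebraic identity
  have key : ∀ N, Jop d b φ (S N) = PowerSeries.X - S (N + 1) := by
    intro N
    have hS : S (N + 1) =
        (∑ k ∈ Finset.range N, ((-1 : ℚ_[p]) ^ (k + 1)) • ((Jop d b φ)^[k + 1] PowerSeries.X))
          + PowerSeries.X := by
      simp only [hSdef]
      rw [Finset.sum_range_succ']
      simp
    have h1 : Jop d b φ (S N) =
        ∑ k ∈ Finset.range N, ((-1 : ℚ_[p]) ^ k) • ((Jop d b φ)^[k + 1] PowerSeries.X) := by
      rw [hSdef, Jop_sum]
      refine Finset.sum_congr rfl fun k _ => ?_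
      rw [Jop_smul]
      congr 1
      exact (Function.iterate_succ_apply' (Jop d b φ) k PowerSeries.X).symm
    have h2 : ∑ k ∈ Finset.range N, ((-1 : ℚ_[p]) ^ k) • ((Jop d b φ)^[k + 1] PowerSeries.X) =
        -∑ k ∈ Finset.range N, ((-1 : ℚ_[p]) ^ (k + 1)) • ((Jop d b φ)^[k + 1] PowerSeries.X) := by
      rw [← Finset.sum_neg_distrib]
      refine Finset.sum_congr rfl fun k _ => ?_
      rw [pow_succ, mul_neg_one, neg_smul, neg_neg]
    rw [h1, h2, hS]
    abel
  -- continuity of Jop coefficientwise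
  have hJl : ∀ m : ℕ, Filter.Tendsto
      (fun N => PowerSeries.coeff m (Jop d b φ (S N))) Filter.atTop
      (nhds (PowerSeries.coeff m (Jop d b φ l))) := by
    intro m
    have hc : ∀ f : PowerSeries ℚ_[p], PowerSeries.coeff m (Jop d b φ f) =
        ∑ i ∈ Finset.Icc 1 d, b i * ∑ k ∈ Finset.range (m + 1),
          PowerSeries.coeff k f * PowerSeries.coeff m ((φiter φ i) ^ k) := by
      intro f
      simp [Jop, coeff_pcomp]
    simp only [hc]
    refine tendsto_finset_sum _ fun i _ => Filter.Tendsto.const_mul _ ?_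
    exact tendsto_finset_sum _ fun k _ => (hl k).mul_const _
  -- part 1
  have part1 : l + Jop d b φ l = PowerSeries.X := by
    ext m
    rw [map_add]
    have hA : Filter.Tendsto
        (fun N => PowerSeries.coeff m (S N) + PowerSeries.coeff m (Jop d b φ (S N)))
        Filter.atTop
        (nhds (PowerSeries.coeff m l + PowerSeries.coeff m (Jop d b φ l))) :=
      (hl m).add (hJl m)
    have hshift : Filter.Tendsto (fun N => PowerSeries.coeff m (S (N + 1)))
        Filter.atTop (nhds (PowerSeries.coeff m l)) :=
      (hl m).comp (Filter.tendsto_add_atTop_nat 1)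
    have hB : Filter.Tendsto
        (fun N => PowerSeries.coeff m (S N) + PowerSeries.coeff m (Jop d b φ (S N)))
        Filter.atTop
        (nhds (PowerSeries.coeff m l +
          (PowerSeries.coeff m PowerSeries.X - PowerSeries.coeff m l))) := by
      have heq : (fun N => PowerSeries.coeff m (S N) +
          PowerSeries.coeff m (Jop d b φ (S N))) =
          fun N => PowerSeries.coeff m (S N) +
            (PowerSeries.coeff m PowerSeries.X - PowerSeries.coeff m (S (N + 1))) := by
        funext N
        rw [key N, map_sub]
      rw [heq]
      exact (hl m).add (tendsto_const_nhds.sub hshift)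
    have := tendsto_nhds_unique hA hB
    rw [this]
    ring
  refine ⟨part1, ?_⟩
  -- part 2
  have hab : ∀ i, a i = a 0 * b i := by
    intro i; rw [hb]; field_simp
  rw [Finset.sum_range_succ']
  have h0 : φiter φ 0 = PowerSeries.X := rfl
  have hsum : ∑ i ∈ Finset.range d, PowerSeries.C (a (i + 1)) * pcomp l (φiter φ (i + 1)) =
      PowerSeries.C (a 0) * Jop d b φ l := by
    rw [Jop, Finset.mul_sum, ← Finset.Ico_add_one_right_eq_Icc, Finset.sum_Ico_eq_sum_range]
    refine Finset.sum_congr rfl fun i _ => ?_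
    rw [← mul_assoc, ← map_mul, add_comm 1 i, ← hab]
  rw [hsum, h0, pcomp_X]
  rw [← mul_add, add_comm (Jop d b φ l) l, part1]
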